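/- Suppose a finite group G = AB with B ≤ Z(G). Then CD(G) = {XB : X ∈ CD(A)}. -/
import Mathlib


open scoped Pointwise

/-- Relative Chermak–Delgado measure `m_W(K) = |K| * |C_W(K)|`. -/
noncomputable def m {G : Type*} [Group G] (W K : Subgroup G) : ℕ :=
  Nat.card K * Nat.card (W ⊓ Subgroup.centralizer (K : Set G) : Subgroup G)

/-- The Chermak–Delgado lattice of `W`: subgroups of `W` maximizing `m W`. -/
def CD {G : Type*} [Group G] (W : Subgroup G) : Set (Subgroup G) :=
  {K | K ≤ W ∧ ∀ L ≤ W, m W L ≤ m W K}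

/-- `m*(W)`, the maximal Chermak–Delgado measure over subgroups of `W`. -/
noncomputable def mstar {G : Type*} [Group G] (W : Subgroup G) : ℕ :=
  ⨆ K : {K : Subgroup G // K ≤ W}, m W K

section Aux

variable {G : Type*} [Group G]

lemma normal_of_le_center' {B : Subgroup G} (hB : B ≤ Subgroup.center G) : B.Normal := by
  refine ⟨fun n hn g => ?_⟩
  have h := Subgroup.mem_center_iff.mp (hB hn) g
  rw [h, mul_inv_cancel_right]
  exact hn

lemma card_inf_mul_relindex' (H K : Subgroup G) :
    Nat.card (H ⊓ K : Subgroup G) * H.relIndex K = Nat.card K := by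
  have e : Nat.card (H ⊓ K : Subgroup G) = Nat.card ((H ⊓ K).subgroupOf K) :=
    (Nat.card_congr (Subgroup.subgroupOfEquivOfLe (inf_le_right : H ⊓ K ≤ K)).toEquiv).symm
  rw [e, Subgroup.inf_subgroupOf_right, Subgroup.relIndex]
  exact Subgroup.card_mul_index _

lemma card_sup_mul_card_inf' [Finite G] (H K : Subgroup G) (hK : K ≤ Subgroup.center G) :
    Nat.card (H ⊔ K : Subgroup G) * Nat.card (K ⊓ H : Subgroup G) =
      Nat.card H * Nat.card K := by
  haveI : K.Normal := normal_of_le_center' hK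
  have h1 := card_inf_mul_relindex' K (H ⊔ K)
  have h2 := card_inf_mul_relindex' K H
  rw [Subgroup.relIndex_sup_right, inf_eq_left.mpr (le_sup_right : K ≤ H ⊔ K)] at h1
  calc Nat.card (H ⊔ K : Subgroup G) * Nat.card (K ⊓ H : Subgroup G)
      = (Nat.card (K ⊓ H : Subgroup G) * K.relIndex H) * Nat.card K := by
        rw [← h1]; ring
    _ = Nat.card H * Nat.card K := by rw [h2]

lemma centralizer_sup_of_le_center' (X S : Subgroup G) (hS : S ≤ Subgroup.center G) :
    Subgroup.centralizer ((X ⊔ S : Subgroup G) : Set G)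
      = Subgroup.centralizer (X : Set G) := by
  apply le_antisymm
  · exact Subgroup.centralizer_le (SetLike.coe_subset_coe.mpr le_sup_left)
  · intro g hg
    have hsub : (X ⊔ S : Subgroup G) ≤ Subgroup.centralizer {g} := by
      apply sup_le
      · intro x hx
        rw [Subgroup.mem_centralizer_iff]
        rintro y (rfl : y = g)
        exact (Subgroup.mem_centralizer_iff.mp hg x hx).symm
      · intro s hs
        rw [Subgroup.mem_centralizer_iff]
        rintro y (rfl : y = g)
        exact Subgroup.mem_center_iff.mp (hS hs) y
    rw [Subgroup.mem_centralizer_iff]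
    intro h hh
    have := Subgroup.mem_centralizer_iff.mp (hsub hh) g rfl
    exact this.symm

lemma mem_sup_normal' {H N : Subgroup G} [N.Normal] {g : G} (hg : g ∈ H ⊔ N) :
    ∃ h ∈ H, ∃ n ∈ N, g = h * n := by
  have : g ∈ ((H : Set G) * (N : Set G)) := by
    rw [← Subgroup.mul_normal]; exact hg
  obtain ⟨h, hh, n, hn, e⟩ := this
  exact ⟨h, hh, n, hn, e.symm⟩

lemma dedekind_decomp' {A B U : Subgroup G}
    (hG : ∀ g : G, ∃ a ∈ A, ∃ b ∈ B, g = a * b) (hBU : B ≤ U) :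
    U = (A ⊓ U) ⊔ B := by
  apply le_antisymm
  · intro u hu
    obtain ⟨a, ha, b, hb, rfl⟩ := hG u
    have ha' : a ∈ U := by
      have e : a = a * b * b⁻¹ := by group
      rw [e]; exact U.mul_mem hu (U.inv_mem (hBU hb))
    exact Subgroup.mul_mem _ (Subgroup.mem_sup_left ⟨ha, ha'⟩) (Subgroup.mem_sup_right hb)
  · exact sup_le inf_le_right hBU

lemma centralizer_decomp' {A B : Subgroup G}
    (hG : ∀ g : G, ∃ a ∈ A, ∃ b ∈ B, g = a * b) (hBZ : B ≤ Subgroup.center G)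
    (X : Subgroup G) :
    Subgroup.centralizer (X : Set G)
      = (A ⊓ Subgroup.centralizer (X : Set G)) ⊔ B := by
  have hBC : B ≤ Subgroup.centralizer (X : Set G) :=
    hBZ.trans (Subgroup.center_le_centralizer _)
  exact dedekind_decomp' hG hBC

lemma m_le_m_sup' [Finite G] (W K S : Subgroup G) (hS : S ≤ Subgroup.center G) :
    m W K ≤ m W (K ⊔ S) := by
  unfold m
  rw [centralizer_sup_of_le_center' K S hS]
  exact Nat.mul_le_mul_right _ (Subgroup.card_le_of_le le_sup_left)

lemma le_of_m_sup_le' [Finite G] {W K S : Subgroup G} (hS : S ≤ Subgroup.center G)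
    (h : m W (K ⊔ S) ≤ m W K) : S ≤ K := by
  unfold m at h
  rw [centralizer_sup_of_le_center' K S hS] at h
  have hpos : 0 < Nat.card (W ⊓ Subgroup.centralizer (K : Set G) : Subgroup G) :=
    Nat.card_pos
  have hcard : Nat.card (K ⊔ S : Subgroup G) ≤ Nat.card K :=
    Nat.le_of_mul_le_mul_right h hpos
  have heq : K ⊔ S = K := Subgroup.eq_of_le_of_card_ge le_sup_left hcard ▸ rfl
  calc S ≤ K ⊔ S := le_sup_right
    _ = K := heq

/-- The key measure computation: for `A ⊓ B ≤ X ≤ A`,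
`m ⊤ (X ⊔ B) * |A ⊓ B|² = m A X * |B|²`. -/
lemma key_computation' [Finite G] {A B : Subgroup G}
    (hG : ∀ g : G, ∃ a ∈ A, ∃ b ∈ B, g = a * b) (hBZ : B ≤ Subgroup.center G)
    {X : Subgroup G} (hXA : X ≤ A) (hZX : A ⊓ B ≤ X) :
    m ⊤ (X ⊔ B) * (Nat.card (A ⊓ B : Subgroup G)) ^ 2
      = m A X * (Nat.card B) ^ 2 := by
  set C := Subgroup.centralizer (X : Set G) with hC
  have hBX : B ⊓ X = A ⊓ B := by
    apply le_antisymm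
    · exact le_inf (inf_le_right.trans hXA) inf_le_left
    · exact le_inf inf_le_right hZX
  have h1 : Nat.card (X ⊔ B : Subgroup G) * Nat.card (A ⊓ B : Subgroup G)
      = Nat.card X * Nat.card B := by
    rw [← hBX]; exact card_sup_mul_card_inf' X B hBZ
  have hBAC : B ⊓ (A ⊓ C) = A ⊓ B := by
    apply le_antisymm
    · exact le_inf (inf_le_right.trans inf_le_left) inf_le_left
    · refine le_inf inf_le_right (le_inf inf_le_left ?_)
      exact inf_le_right.trans (hBZ.trans (Subgroup.center_le_centralizer _))
  have h2 : Nat.card C * Nat.card (A ⊓ B : Subgroup G)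
      = Nat.card (A ⊓ C : Subgroup G) * Nat.card B := by
    have hd : C = (A ⊓ C) ⊔ B := centralizer_decomp' hG hBZ X
    calc Nat.card C * Nat.card (A ⊓ B : Subgroup G)
        = Nat.card ((A ⊓ C) ⊔ B : Subgroup G) * Nat.card (B ⊓ (A ⊓ C) : Subgroup G) := by
          rw [← hd, hBAC]
      _ = Nat.card (A ⊓ C : Subgroup G) * Nat.card B := card_sup_mul_card_inf' _ B hBZ
  have hcent : Subgroup.centralizer ((X ⊔ B : Subgroup G) : Set G) = C :=
    centralizer_sup_of_le_center' X B hBZ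
  unfold m
  rw [hcent, top_inf_eq]
  calc Nat.card (X ⊔ B : Subgroup G) * Nat.card C * Nat.card (A ⊓ B : Subgroup G) ^ 2
      = (Nat.card (X ⊔ B : Subgroup G) * Nat.card (A ⊓ B : Subgroup G))
          * (Nat.card C * Nat.card (A ⊓ B : Subgroup G)) := by ring
    _ = (Nat.card X * Nat.card B) * (Nat.card (A ⊓ C : Subgroup G) * Nat.card B) := by
        rw [h1, h2]
    _ = Nat.card X * Nat.card (A ⊓ C : Subgroup G) * Nat.card B ^ 2 := by ring

end Aux

theorem stmt15 {G : Type*} [Group G] [Finite G] (A B : Subgroup G)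
    (hG : ∀ g : G, ∃ a ∈ A, ∃ b ∈ B, g = a * b)
    (hBZ : B ≤ Subgroup.center G) :
    CD (⊤ : Subgroup G) = {U : Subgroup G | ∃ X ∈ CD A, U = X ⊔ B} := by
  haveI : B.Normal := normal_of_le_center' hBZ
  have hZc : A ⊓ B ≤ Subgroup.center G := inf_le_right.trans hBZ
  have hcpos : 0 < Nat.card B := Nat.card_pos
  have hzpos : 0 < Nat.card (A ⊓ B : Subgroup G) := Nat.card_pos
  ext U
  constructor
  · rintro ⟨-, hmax⟩
    -- First, B ≤ U.
    have hBU : B ≤ U := le_of_m_sup_le' hBZ (hmax (U ⊔ B) le_top)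
    set X := A ⊓ U with hX
    have hU_eq : U = X ⊔ B := dedekind_decomp' hG hBU
    have hXA : X ≤ A := inf_le_left
    have hZX : A ⊓ B ≤ X := le_inf inf_le_left (inf_le_right.trans hBU)
    refine ⟨X, ⟨hXA, ?_⟩, hU_eq⟩
    intro Y hY
    have h3 : m A Y ≤ m A (Y ⊔ (A ⊓ B)) := m_le_m_sup' A Y (A ⊓ B) hZc
    have hYZA : Y ⊔ (A ⊓ B) ≤ A := sup_le hY inf_le_left
    have k1 := key_computation' hG hBZ hYZA (le_sup_right : A ⊓ B ≤ Y ⊔ (A ⊓ B))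
    have k2 := key_computation' hG hBZ hXA hZX
    have h4 : m ⊤ ((Y ⊔ (A ⊓ B)) ⊔ B) ≤ m ⊤ (X ⊔ B) := by
      rw [← hU_eq]; exact hmax _ le_top
    have h5 : m A (Y ⊔ (A ⊓ B)) * Nat.card B ^ 2 ≤ m A X * Nat.card B ^ 2 := by
      rw [← k1, ← k2]
      exact Nat.mul_le_mul_right _ h4
    exact h3.trans (Nat.le_of_mul_le_mul_right h5 (by positivity))
  · rintro ⟨X, ⟨hXA, hXmax⟩, rfl⟩
    have hZX : A ⊓ B ≤ X :=
      le_of_m_sup_le' hZc (hXmax (X ⊔ (A ⊓ B)) (sup_le hXA inf_le_left))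
    refine ⟨le_top, ?_⟩
    intro V _
    have h2 : m ⊤ V ≤ m ⊤ (V ⊔ B) := m_le_m_sup' ⊤ V B hBZ
    set Y := A ⊓ (V ⊔ B) with hY
    have hVB : V ⊔ B = Y ⊔ B := dedekind_decomp' hG le_sup_right
    have hYA : Y ≤ A := inf_le_left
    have hZY : A ⊓ B ≤ Y := le_inf inf_le_left (inf_le_right.trans le_sup_right)
    have k1 := key_computation' hG hBZ hYA hZY
    have k2 := key_computation' hG hBZ hXA hZX
    have h5 : m ⊤ (Y ⊔ B) * Nat.card (A ⊓ B : Subgroup G) ^ 2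
        ≤ m ⊤ (X ⊔ B) * Nat.card (A ⊓ B : Subgroup G) ^ 2 := by
      rw [k1, k2]
      exact Nat.mul_le_mul_right _ (hXmax Y hYA)
    have h6 : m ⊤ (Y ⊔ B) ≤ m ⊤ (X ⊔ B) :=
      Nat.le_of_mul_le_mul_right h5 (by positivity)
    calc m ⊤ V ≤ m ⊤ (V ⊔ B) := h2
      _ = m ⊤ (Y ⊔ B) := by rw [hVB]
      _ ≤ m ⊤ (X ⊔ B) := h6
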